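/- arXiv:1212.0048 — 2 statements merged into one kernel-verified Lean document; each statement's English description precedes it below -/
import Mathlib

section
/- For every nonnegative integer U, W(pqU) = W(pqU+1) = W(pU) + W(qU) − W(U). -/
/-- A strictly chained `(p,q)`-ary partition of `U`: a finite strictly decreasing
list of positive integers of the form `p^a * q^b`, each part divisible by the next,
summing to `U`. -/
def IsSCPartition (p q U : ℕ) (l : List ℕ) : Prop :=
  (∀ x ∈ l, ∃ a b : ℕ, x = p ^ a * q ^ b) ∧
  List.Chain' (fun x y => y ∣ x ∧ y < x) l ∧
  l.sum = U

/-- The set of strictly chained `(p,q)`-ary partitions of `U`. -/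
def Omega (p q U : ℕ) : Set (List ℕ) := {l | IsSCPartition p q U l}

/-- The subset of `Omega p q U` of partitions with no part equal to `1`. -/
def OmegaStar (p q U : ℕ) : Set (List ℕ) := {l | IsSCPartition p q U l ∧ 1 ∉ l}

/-- `W p q U` is the number of strictly chained `(p,q)`-ary partitions of `U`. -/
noncomputable def W (p q U : ℕ) : ℕ := (Omega p q U).ncard

/-- `Wstar p q U` is the number of strictly chained `(p,q)`-ary partitions of `U`
with no part equal to `1`. -/
noncomputable def Wstar (p q U : ℕ) : ℕ := (OmegaStar p q U).ncard

namespace SCAux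

/-- The chain relation. -/
abbrev R : ℕ → ℕ → Prop := fun x y => y ∣ x ∧ y < x

lemma pairwise_of_chain' {l : List ℕ} (h : List.Chain' R l) : l.Pairwise R :=
  by
    haveI : Trans R R R := ⟨fun h1 h2 => ⟨h2.1.trans h1.1, h2.2.trans h1.2⟩⟩
    exact List.isChain_iff_pairwise.mp h

lemma part_pos {p q x : ℕ} (hp : 0 < p) (hq : 0 < q)
    (h : ∃ a b : ℕ, x = p ^ a * q ^ b) : 0 < x := by
  obtain ⟨a, b, rfl⟩ := h; positivity

lemma omega_finite {p q : ℕ} (hp : 0 < p) (hq : 0 < q) (N : ℕ) :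
    (Omega p q N).Finite := by
  apply Set.Finite.of_finite_image (f := List.toFinset)
  · apply Set.Finite.subset ((Finset.Icc 1 N).powerset).finite_toSet
    rintro s ⟨l, hl, rfl⟩
    have hl' : IsSCPartition p q N l := hl
    simp only [Finset.mem_coe, Finset.mem_powerset]
    intro x hx
    rw [List.mem_toFinset] at hx
    rw [Finset.mem_Icc]
    refine ⟨part_pos hp hq (hl'.1 x hx), ?_⟩
    calc x ≤ l.sum := List.single_le_sum (fun y _ => Nat.zero_le y) x hx
      _ = N := hl'.2.2
  · intro l1 h1 l2 h2 he
    have h1' : IsSCPartition p q N l1 := h1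
    have h2' : IsSCPartition p q N l2 := h2
    have s1 : l1.Pairwise (· > ·) := (pairwise_of_chain' h1'.2.1).imp fun h => h.2
    have s2 : l2.Pairwise (· > ·) := (pairwise_of_chain' h2'.2.1).imp fun h => h.2
    exact List.Perm.eq_of_pairwise' s1 s2
      (List.perm_of_nodup_nodup_toFinset_eq s1.nodup s2.nodup he)

/-- Partitions of `N` with every part divisible by `d`. -/
def Adiv (p q d N : ℕ) : Set (List ℕ) := {l | IsSCPartition p q N l ∧ ∀ x ∈ l, d ∣ x}

lemma Adiv_subset {p q d N : ℕ} : Adiv p q d N ⊆ Omega p q N := fun _ h => h.1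

lemma omegaStar_subset {p q N : ℕ} : OmegaStar p q N ⊆ Omega p q N := fun _ h => h.1

lemma Adiv_eq_empty {p q d N : ℕ} (h : ¬ d ∣ N) : Adiv p q d N = ∅ := by
  ext l
  simp only [Adiv, Set.mem_setOf_eq, Set.mem_empty_iff_false, iff_false, not_and]
  rintro ⟨_, _, hsum⟩ hdvd
  exact h (hsum ▸ List.dvd_sum hdvd)

lemma Adiv_eq_image {p q d : ℕ} (hd : 0 < d)
    (hmul : ∀ a b : ℕ, ∃ a' b' : ℕ, d * (p ^ a * q ^ b) = p ^ a' * q ^ b')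
    (hquot : ∀ x : ℕ, (∃ a b : ℕ, x = p ^ a * q ^ b) → d ∣ x →
      ∃ a b : ℕ, x = d * (p ^ a * q ^ b))
    (M : ℕ) : Adiv p q d (d * M) = (fun l => l.map (d * ·)) '' Omega p q M := by
  ext l
  constructor
  · rintro ⟨⟨hparts, hchain, hsum⟩, hdvd⟩
    have hl2 : (l.map (· / d)).map (d * ·) = l := by
      rw [List.map_map]
      have : ∀ x ∈ l, ((d * ·) ∘ (· / d)) x = id x := by
        intro x hx
        simp only [Function.comp_apply, id_eq]
        exact Nat.mul_div_cancel' (hdvd x hx) 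
      rw [List.map_congr_left this, List.map_id]
    refine ⟨l.map (· / d), ⟨?_, ?_, ?_⟩, hl2⟩
    · intro x hx
      simp only [List.mem_map] at hx
      obtain ⟨y, hy, rfl⟩ := hx
      obtain ⟨a, b, hab⟩ := hquot y (hparts y hy) (hdvd y hy)
      exact ⟨a, b, by rw [hab, Nat.mul_div_cancel_left _ hd]⟩
    · have hc : List.Chain' R ((l.map (· / d)).map (d * ·)) := hl2.symm ▸ hchain
      unfold List.Chain' at hc
      rw [List.isChain_map] at hc
      refine hc.imp ?_
      intro a b hab
      exact ⟨(Nat.mul_dvd_mul_iff_left hd).mp hab.1,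
        Nat.lt_of_mul_lt_mul_left hab.2⟩
    · have : ((l.map (· / d)).map (d * ·)).sum = d * M := by rw [hl2, hsum]
      have hs : ((l.map (· / d)).map (d * ·)).sum = d * (l.map (· / d)).sum := by
        rw [← List.map_id (l.map (· / d)), List.map_map]
        exact List.sum_map_mul_left _ id d
      rw [hs] at this
      exact Nat.eq_of_mul_eq_mul_left hd this
  · rintro ⟨l', ⟨hparts, hchain, hsum⟩, rfl⟩
    refine ⟨⟨?_, ?_, ?_⟩, ?_⟩
    · intro x hx
      simp only [List.mem_map] at hx
      obtain ⟨y, hy, rfl⟩ := hx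
      obtain ⟨a, b, rfl⟩ := hparts y hy
      exact hmul a b
    · unfold List.Chain'
      rw [List.isChain_map]
      refine hchain.imp ?_
      intro a b hab
      exact ⟨mul_dvd_mul_left d hab.1, mul_lt_mul_of_pos_left hab.2 hd⟩
    · have hs : (l'.map (d * ·)).sum = d * l'.sum := by
        rw [← List.map_id l', List.map_map]
        exact List.sum_map_mul_left _ id d
      rw [hs, hsum]
    · intro x hx
      simp only [List.mem_map] at hx
      obtain ⟨y, _, rfl⟩ := hx
      exact Dvd.intro y rfl

lemma Adiv_ncard {p q d : ℕ} (hd : 0 < d)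
    (hmul : ∀ a b : ℕ, ∃ a' b' : ℕ, d * (p ^ a * q ^ b) = p ^ a' * q ^ b')
    (hquot : ∀ x : ℕ, (∃ a b : ℕ, x = p ^ a * q ^ b) → d ∣ x →
      ∃ a b : ℕ, x = d * (p ^ a * q ^ b))
    (M : ℕ) : (Adiv p q d (d * M)).ncard = W p q M := by
  rw [Adiv_eq_image hd hmul hquot M]
  exact Set.ncard_image_of_injective _
    (List.map_injective_iff.mpr (mul_right_injective₀ hd.ne'))

lemma last_rel {l : List ℕ} (hc : List.Chain' R l) (h : l ≠ []) {x : ℕ} (hx : x ∈ l) :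
    x = l.getLast h ∨ (l.getLast h ∣ x ∧ l.getLast h < x) := by
  have hp : List.Pairwise R (l.dropLast ++ [l.getLast h]) := by
    rw [List.dropLast_append_getLast h]; exact pairwise_of_chain' hc
  have hx' : x ∈ l.dropLast ++ [l.getLast h] := by
    rw [List.dropLast_append_getLast h]; exact hx
  rcases List.mem_append.mp hx' with h1 | h2
  · right
    exact (List.pairwise_append.mp hp).2.2 x h1 _ (List.mem_singleton_self _)
  · left; simpa using h2

lemma omegaStar_union {p q : ℕ} (hp : 1 < p) (hq : 1 < q) {N : ℕ} (hN : N ≠ 0) :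
    OmegaStar p q N = Adiv p q p N ∪ Adiv p q q N := by
  ext l
  constructor
  · rintro ⟨⟨hparts, hchain, hsum⟩, h1⟩
    have hne : l ≠ [] := by rintro rfl; exact hN hsum.symm
    have hm : l.getLast hne ∈ l := List.getLast_mem hne
    obtain ⟨a, b, hab⟩ := hparts _ hm
    have hm1 : l.getLast hne ≠ 1 := fun h => h1 (h ▸ hm)
    have hdvd : ∀ x ∈ l, l.getLast hne ∣ x := by
      intro x hx
      rcases last_rel hchain hne hx with h | h
      · exact h ▸ dvd_refl _
      · exact h.1
    have hpq : p ∣ l.getLast hne ∨ q ∣ l.getLast hne := by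
      rcases Nat.eq_zero_or_pos a with ha | ha
      · rcases Nat.eq_zero_or_pos b with hb | hb
        · exfalso; apply hm1; rw [hab, ha, hb]; simp
        · right; rw [hab]; exact Dvd.dvd.mul_left (dvd_pow_self q hb.ne') _
      · left; rw [hab]; exact Dvd.dvd.mul_right (dvd_pow_self p ha.ne') _
    rcases hpq with h | h
    · exact Or.inl ⟨⟨hparts, hchain, hsum⟩, fun x hx => h.trans (hdvd x hx)⟩
    · exact Or.inr ⟨⟨hparts, hchain, hsum⟩, fun x hx => h.trans (hdvd x hx)⟩
  · rintro (⟨hsc, hdvd⟩ | ⟨hsc, hdvd⟩)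
    · exact ⟨hsc, fun hmem =>
        absurd (Nat.le_of_dvd one_pos (hdvd 1 hmem)) (by omega)⟩
    · exact ⟨hsc, fun hmem =>
        absurd (Nat.le_of_dvd one_pos (hdvd 1 hmem)) (by omega)⟩

lemma Adiv_inter {p q : ℕ} (hpq : Nat.Coprime p q) (N : ℕ) :
    Adiv p q p N ∩ Adiv p q q N = Adiv p q (p * q) N := by
  ext l
  constructor
  · rintro ⟨⟨hsc, h1⟩, ⟨_, h2⟩⟩
    exact ⟨hsc, fun x hx => hpq.mul_dvd_of_dvd_of_dvd (h1 x hx) (h2 x hx)⟩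
  · rintro ⟨hsc, h⟩
    exact ⟨⟨hsc, fun x hx => (dvd_mul_right p q).trans (h x hx)⟩,
      ⟨hsc, fun x hx => (dvd_mul_left q p).trans (h x hx)⟩⟩

lemma omega_split {p q : ℕ} (hp : 1 < p) (hq : 1 < q) (N : ℕ) :
    Omega p q (N + 1) = OmegaStar p q (N + 1) ∪ (fun l => l ++ [1]) '' OmegaStar p q N := by
  have hp0 : 0 < p := by omega
  have hq0 : 0 < q := by omega
  ext l
  constructor
  · intro hl
    have hl' : IsSCPartition p q (N + 1) l := hl
    obtain ⟨hparts, hchain, hsum⟩ := hl'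
    by_cases h1 : 1 ∈ l
    · right
      have hne : l ≠ [] := List.ne_nil_of_mem h1
      have hlast : l.getLast hne = 1 := by
        rcases last_rel hchain hne h1 with h | h
        · exact h.symm
        · have := part_pos hp0 hq0 (hparts _ (List.getLast_mem hne))
          omega
      have hl2 : l.dropLast ++ [1] = l := by
        rw [← hlast]; exact List.dropLast_append_getLast hne
      have hchain2 : List.Chain' R (l.dropLast ++ [1]) := hl2.symm ▸ hchain
      refine ⟨l.dropLast, ⟨⟨?_, ?_, ?_⟩, ?_⟩, hl2⟩
      · exact fun x hx => hparts x (List.dropLast_subset l hx)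
      · exact (List.isChain_append.mp hchain2).1
      · have : (l.dropLast ++ [1]).sum = N + 1 := by rw [hl2, hsum]
        rw [List.sum_append] at this
        simp at this
        omega
      · intro hmem
        have pw : List.Pairwise R (l.dropLast ++ [1]) := by
          rw [hl2]; exact pairwise_of_chain' hchain
        have := (List.pairwise_append.mp pw).2.2 1 hmem 1 (List.mem_singleton_self _)
        exact absurd this.2 (lt_irrefl 1)
    · exact Or.inl ⟨⟨hparts, hchain, hsum⟩, h1⟩
  · rintro (⟨hsc, _⟩ | ⟨l', ⟨⟨hparts, hchain, hsum⟩, h1⟩, rfl⟩)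
    · exact hsc
    · refine ⟨?_, ?_, ?_⟩
      · intro x hx
        rcases List.mem_append.mp hx with hx | hx
        · exact hparts x hx
        · refine ⟨0, 0, ?_⟩
          simp at hx
          simp [hx]
      · unfold List.Chain'
        rw [List.isChain_append]
        refine ⟨hchain, List.isChain_singleton 1, ?_⟩
        intro x hx y hy
        simp only [List.head?_cons, Option.mem_some_iff] at hy
        subst hy
        have hxl : x ∈ l' := List.mem_of_mem_getLast? hx
        have hxpos : 0 < x := part_pos hp0 hq0 (hparts x hxl)
        have hx1 : x ≠ 1 := fun h => h1 (h ▸ hxl)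
        exact ⟨one_dvd x, by omega⟩
      · rw [List.sum_append, hsum]; simp

lemma W_succ {p q : ℕ} (hp : 1 < p) (hq : 1 < q) (N : ℕ) :
    W p q (N + 1) = Wstar p q (N + 1) + Wstar p q N := by
  have hp0 : 0 < p := by omega
  have hq0 : 0 < q := by omega
  have hfin1 : (OmegaStar p q (N + 1)).Finite :=
    (omega_finite hp0 hq0 (N + 1)).subset omegaStar_subset
  have hfin2 : ((fun l => l ++ [1]) '' OmegaStar p q N).Finite :=
    ((omega_finite hp0 hq0 N).subset omegaStar_subset).image _
  have hdisj : Disjoint (OmegaStar p q (N + 1)) ((fun l => l ++ [1]) '' OmegaStar p q N) := by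
    rw [Set.disjoint_left]
    rintro l ⟨_, h1⟩ ⟨l', _, rfl⟩
    exact h1 (List.mem_append.mpr (Or.inr (List.mem_singleton_self 1)))
  rw [W, omega_split hp hq N, Set.ncard_union_eq hdisj hfin1 hfin2,
    Set.ncard_image_of_injective _ (List.append_left_injective [1])]
  rfl

lemma omega_zero {p q : ℕ} (hp : 0 < p) (hq : 0 < q) : Omega p q 0 = {[]} := by
  ext l
  constructor
  · rintro ⟨hparts, _, hsum⟩
    rw [List.sum_eq_zero_iff] at hsum
    cases l with
    | nil => rfl
    | cons a t =>
      have := part_pos hp hq (hparts a List.mem_cons_self)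
      have := hsum a List.mem_cons_self
      omega
  · rintro rfl
    exact ⟨fun x hx => absurd hx List.not_mem_nil, List.isChain_nil, rfl⟩

lemma W_zero {p q : ℕ} (hp : 0 < p) (hq : 0 < q) : W p q 0 = 1 := by
  rw [W, omega_zero hp hq, Set.ncard_singleton]

lemma Wstar_zero {p q : ℕ} (hp : 0 < p) (hq : 0 < q) : Wstar p q 0 = 1 := by
  have : OmegaStar p q 0 = {[]} := by
    ext l
    constructor
    · rintro ⟨hsc, _⟩
      have : l ∈ Omega p q 0 := hsc
      rwa [omega_zero hp hq] at this
    · rintro rfl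
      exact ⟨⟨fun x hx => absurd hx List.not_mem_nil, List.isChain_nil, rfl⟩,
        List.not_mem_nil⟩
  rw [Wstar, this, Set.ncard_singleton]

lemma Wstar_eq_zero {p q N : ℕ} (hp : 1 < p) (hq : 1 < q) (hN : N ≠ 0)
    (hpN : ¬ p ∣ N) (hqN : ¬ q ∣ N) : Wstar p q N = 0 := by
  rw [Wstar, omegaStar_union hp hq hN, Adiv_eq_empty hpN, Adiv_eq_empty hqN]
  simp

lemma Adiv_ncard_p {p q : ℕ} (hp : 1 < p) (hpq : Nat.Coprime p q) (M : ℕ) :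
    (Adiv p q p (p * M)).ncard = W p q M := by
  apply Adiv_ncard (by omega)
  · exact fun a b => ⟨a + 1, b, by ring⟩
  · rintro x ⟨a, b, rfl⟩ hdvd
    cases a with
    | zero =>
      exfalso
      rw [pow_zero, one_mul] at hdvd
      have := (hpq.pow_right b).eq_one_of_dvd hdvd
      omega
    | succ n => exact ⟨n, b, by ring⟩

lemma Adiv_ncard_q {p q : ℕ} (hq : 1 < q) (hpq : Nat.Coprime p q) (M : ℕ) :
    (Adiv p q q (q * M)).ncard = W p q M := by
  apply Adiv_ncard (by omega)
  · exact fun a b => ⟨a, b + 1, by ring⟩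
  · rintro x ⟨a, b, rfl⟩ hdvd
    cases b with
    | zero =>
      exfalso
      rw [pow_zero, mul_one] at hdvd
      have := (hpq.symm.pow_right a).eq_one_of_dvd hdvd
      omega
    | succ n => exact ⟨a, n, by ring⟩

lemma Adiv_ncard_pq {p q : ℕ} (hp : 1 < p) (hq : 1 < q) (hpq : Nat.Coprime p q) (M : ℕ) :
    (Adiv p q (p * q) (p * q * M)).ncard = W p q M := by
  apply Adiv_ncard (by positivity)
  · exact fun a b => ⟨a + 1, b + 1, by ring⟩
  · rintro x ⟨a, b, rfl⟩ hdvd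
    have hpd : p ∣ p ^ a * q ^ b := (dvd_mul_right p q).trans hdvd
    have hqd : q ∣ p ^ a * q ^ b := (dvd_mul_left q p).trans hdvd
    cases a with
    | zero =>
      exfalso
      rw [pow_zero, one_mul] at hpd
      have := (hpq.pow_right b).eq_one_of_dvd hpd
      omega
    | succ n =>
      cases b with
      | zero =>
        exfalso
        rw [pow_zero, mul_one] at hqd
        have := (hpq.symm.pow_right (n + 1)).eq_one_of_dvd hqd
        omega
      | succ m => exact ⟨n, m, by ring⟩

lemma wstar_main {p q : ℕ} (hp : 1 < p) (hq : 1 < q) (hpq : Nat.Coprime p q)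
    {U : ℕ} (hU : U ≠ 0) :
    Wstar p q (p * q * U) + W p q U = W p q (q * U) + W p q (p * U) := by
  have hp0 : 0 < p := by omega
  have hq0 : 0 < q := by omega
  have hN : p * q * U ≠ 0 := by positivity
  have hfinA : (Adiv p q p (p * q * U)).Finite :=
    (omega_finite hp0 hq0 _).subset Adiv_subset
  have hfinB : (Adiv p q q (p * q * U)).Finite :=
    (omega_finite hp0 hq0 _).subset Adiv_subset
  have key := Set.ncard_union_add_ncard_inter (Adiv p q p (p * q * U))
    (Adiv p q q (p * q * U)) hfinA hfinB
  rw [Adiv_inter hpq] at key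
  have h1 : (Adiv p q p (p * q * U)).ncard = W p q (q * U) := by
    rw [show p * q * U = p * (q * U) by ring]
    exact Adiv_ncard_p hp hpq (q * U)
  have h2 : (Adiv p q q (p * q * U)).ncard = W p q (p * U) := by
    rw [show p * q * U = q * (p * U) by ring]
    exact Adiv_ncard_q hq hpq (p * U)
  have h3 : (Adiv p q (p * q) (p * q * U)).ncard = W p q U := by
    rw [show p * q * U = p * q * U from rfl]
    exact Adiv_ncard_pq hp hq hpq U
  rw [h1, h2, h3] at key
  rw [Wstar, omegaStar_union hp hq hN]
  exact key

end SCAux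

open SCAux in
theorem W_pqU (p q : ℕ) (hp : 1 < p) (hq : 1 < q) (hpq : Nat.Coprime p q) (U : ℕ) :
    W p q (p * q * U) = W p q (p * q * U + 1) ∧
    (W p q (p * q * U) : ℤ) = (W p q (p * U) : ℤ) + (W p q (q * U) : ℤ) - (W p q U : ℤ) := by
  have hp0 : 0 < p := by omega
  have hq0 : 0 < q := by omega
  rcases Nat.eq_zero_or_pos U with rfl | hU
  · simp only [Nat.mul_zero]
    have h0 : W p q 0 = 1 := W_zero hp0 hq0
    have hs1 : Wstar p q 1 = 0 := by
      apply Wstar_eq_zero hp hq one_ne_zero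
      · intro h; have := Nat.le_of_dvd one_pos h; omega
      · intro h; have := Nat.le_of_dvd one_pos h; omega
    have h1 : W p q 1 = 1 := by
      have h := W_succ hp hq 0
      norm_num [hs1, Wstar_zero hp0 hq0] at h
      exact h
    constructor
    · norm_num [h0, h1]
    · rw [h0]; norm_num
  · set N := p * q * U with hNdef
    have hN2 : 2 ≤ N := by
      calc 2 ≤ p := hp
        _ = p * 1 * 1 := by ring
        _ ≤ p * q * U := Nat.mul_le_mul (Nat.mul_le_mul le_rfl (by omega)) (by omega)
    have hpN : p ∣ N := ⟨q * U, by rw [hNdef]; ring⟩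
    have hqN : q ∣ N := ⟨p * U, by rw [hNdef]; ring⟩
    have hnp1 : ¬ p ∣ N - 1 := by
      intro h
      have h2 := Nat.dvd_sub hpN h
      rw [show N - (N - 1) = 1 by omega] at h2
      have := Nat.le_of_dvd one_pos h2; omega
    have hnq1 : ¬ q ∣ N - 1 := by
      intro h
      have h2 := Nat.dvd_sub hqN h
      rw [show N - (N - 1) = 1 by omega] at h2
      have := Nat.le_of_dvd one_pos h2; omega
    have hnp2 : ¬ p ∣ N + 1 := by
      intro h
      have h2 := Nat.dvd_sub h hpN
      rw [show N + 1 - N = 1 by omega] at h2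
      have := Nat.le_of_dvd one_pos h2; omega
    have hnq2 : ¬ q ∣ N + 1 := by
      intro h
      have h2 := Nat.dvd_sub h hqN
      rw [show N + 1 - N = 1 by omega] at h2
      have := Nat.le_of_dvd one_pos h2; omega
    have hWs1 : Wstar p q (N - 1) = 0 := Wstar_eq_zero hp hq (by omega) hnp1 hnq1
    have hWs2 : Wstar p q (N + 1) = 0 := Wstar_eq_zero hp hq (by omega) hnp2 hnq2
    have hWN : W p q N = Wstar p q N + Wstar p q (N - 1) := by
      have h := W_succ hp hq (N - 1)
      rw [show N - 1 + 1 = N by omega] at h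
      exact h
    have hWN1 : W p q (N + 1) = Wstar p q (N + 1) + Wstar p q N := W_succ hp hq N
    have key := wstar_main hp hq hpq (U := U) (by omega)
    rw [← hNdef] at key
    constructor
    · omega
    · have hnat : W p q N + W p q U = W p q (q * U) + W p q (p * U) := by omega
      have := congrArg (Nat.cast : ℕ → ℤ) hnat
      push_cast at this
      linarith
end

section
/- Assume p = 2. Then for every integer U ≥ 1, W(qU) = W(U) + W(qU−1). -/
instance SCtrans : IsTrans ℕ (fun x y => y ∣ x ∧ y < x) :=
  ⟨fun _ _ _ hab hbc => ⟨hbc.1.trans hab.1, hbc.2.trans hab.2⟩⟩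

def binList (n : ℕ) : List ℕ :=
  if h : n = 0 then [] else 2 ^ Nat.log 2 n :: binList (n - 2 ^ Nat.log 2 n)
  decreasing_by exact Nat.sub_lt (Nat.pos_of_ne_zero h) (pow_pos (by norm_num) _)

lemma binList_zero : binList 0 = [] := by simp [binList]

lemma binList_pos {n : ℕ} (h : n ≠ 0) :
    binList n = 2 ^ Nat.log 2 n :: binList (n - 2 ^ Nat.log 2 n) := by
  rw [binList]; simp [h]

lemma binList_sum (n : ℕ) : (binList n).sum = n := by
  induction n using Nat.strong_induction_on with
  | _ n ih =>
    rcases eq_or_ne n 0 with rfl | h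
    · simp [binList_zero]
    · have h1 : 2 ^ Nat.log 2 n ≤ n := Nat.pow_log_le_self 2 h
      have h2 : 0 < 2 ^ Nat.log 2 n := pow_pos (by norm_num) _
      rw [binList_pos h, List.sum_cons, ih _ (Nat.sub_lt (Nat.pos_of_ne_zero h) h2)]
      omega

lemma binList_mem_pow' (n : ℕ) : ∀ x ∈ binList n, ∃ k, x = 2 ^ k := by
  induction n using Nat.strong_induction_on with
  | _ n ih =>
    intro x hx
    rcases eq_or_ne n 0 with rfl | h
    · simp [binList_zero] at hx
    · rw [binList_pos h] at hx
      rcases List.mem_cons.mp hx with h1 | h1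
      · exact ⟨_, h1⟩
      · exact ih _ (Nat.sub_lt (Nat.pos_of_ne_zero h) (pow_pos (by norm_num) _)) _ h1

lemma binList_mem_le' (n : ℕ) : ∀ x ∈ binList n, x ≤ n := by
  induction n using Nat.strong_induction_on with
  | _ n ih =>
    intro x hx
    rcases eq_or_ne n 0 with rfl | h
    · simp [binList_zero] at hx
    · rw [binList_pos h] at hx
      rcases List.mem_cons.mp hx with h1 | h1
      · exact h1 ▸ Nat.pow_log_le_self 2 h
      · exact le_trans
          (ih _ (Nat.sub_lt (Nat.pos_of_ne_zero h) (pow_pos (by norm_num) _)) _ h1)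
          (Nat.sub_le _ _)

lemma binList_mem_pow {n x : ℕ} (hx : x ∈ binList n) : ∃ k, x = 2 ^ k :=
  binList_mem_pow' n x hx

lemma binList_mem_le {n x : ℕ} (hx : x ∈ binList n) : x ≤ n :=
  binList_mem_le' n x hx

lemma binList_pairwise (n : ℕ) :
    (binList n).Pairwise (fun x y => y ∣ x ∧ y < x) := by
  induction n using Nat.strong_induction_on with
  | _ n ih =>
    rcases eq_or_ne n 0 with rfl | h
    · simp [binList_zero]
    · have h2 : 0 < 2 ^ Nat.log 2 n := pow_pos (by norm_num) _
      have hm : n - 2 ^ Nat.log 2 n < n := Nat.sub_lt (Nat.pos_of_ne_zero h) h2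
      rw [binList_pos h]
      refine List.pairwise_cons.mpr ⟨fun y hy => ?_, ih _ hm⟩
      obtain ⟨k, rfl⟩ := binList_mem_pow hy
      have hle : 2 ^ k ≤ n - 2 ^ Nat.log 2 n := binList_mem_le hy
      have hlt : n - 2 ^ Nat.log 2 n < 2 ^ Nat.log 2 n := by
        have := Nat.lt_pow_succ_log_self (by norm_num : (1:ℕ) < 2) n
        have := Nat.pow_log_le_self 2 h
        rw [pow_succ] at *
        omega
      have hklt : k < Nat.log 2 n := by
        have : (2:ℕ) ^ k < 2 ^ Nat.log 2 n := lt_of_le_of_lt hle hlt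
        exact (Nat.pow_lt_pow_iff_right (by norm_num)).mp this
      exact ⟨pow_dvd_pow 2 hklt.le, lt_of_le_of_lt hle hlt⟩

lemma pow_sum_lt : ∀ (l : List ℕ) (k : ℕ), (∀ x ∈ l, ∃ j, x = 2 ^ j) →
    l.Pairwise (fun x y => y ∣ x ∧ y < x) → (∀ x ∈ l, x < 2 ^ k) → l.sum < 2 ^ k := by
  intro l
  induction l with
  | nil => intro k _ _ _; simpa using Nat.pos_pow_of_pos k (by norm_num : 0 < 2)
  | cons h t ih =>
    intro k hpow hpw hlt
    obtain ⟨j, rfl⟩ := hpow _ List.mem_cons_self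
    have hjk : j < k := (Nat.pow_lt_pow_iff_right (by norm_num)).mp (hlt _ List.mem_cons_self)
    have hts : t.sum < 2 ^ j := by
      refine ih j (fun x hx => hpow x (List.mem_cons_of_mem _ hx))
        (List.pairwise_cons.mp hpw).2 (fun x hx => ((List.pairwise_cons.mp hpw).1 x hx).2)
    have : (2:ℕ) ^ (j+1) ≤ 2 ^ k := Nat.pow_le_pow_right (by norm_num) hjk
    rw [List.sum_cons]
    rw [pow_succ] at this
    omega

lemma binList_unique : ∀ (l : List ℕ), (∀ x ∈ l, ∃ j, x = 2 ^ j) →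
    l.Pairwise (fun x y => y ∣ x ∧ y < x) → binList l.sum = l := by
  intro l
  induction l with
  | nil => simpa using binList_zero
  | cons h t ih =>
    intro hpow hpw
    obtain ⟨j, rfl⟩ := hpow _ List.mem_cons_self
    have hts : t.sum < 2 ^ j :=
      pow_sum_lt t j (fun x hx => hpow x (List.mem_cons_of_mem _ hx))
        (List.pairwise_cons.mp hpw).2 (fun x hx => ((List.pairwise_cons.mp hpw).1 x hx).2)
    have hsum : (2 ^ j :: t).sum = 2 ^ j + t.sum := List.sum_cons
    have hne : (2 ^ j :: t).sum ≠ 0 := by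
      have : 0 < (2:ℕ) ^ j := pow_pos (by norm_num) _
      omega
    have hlog : Nat.log 2 ((2 ^ j :: t).sum) = j := by
      refine Nat.log_eq_of_pow_le_of_lt_pow (by omega) ?_
      rw [pow_succ]; omega
    rw [binList_pos hne, hlog, hsum]
    congr 1
    · have : 2 ^ j + t.sum - 2 ^ j = t.sum := by omega
      rw [this]
      exact ih (fun x hx => hpow x (List.mem_cons_of_mem _ hx)) (List.pairwise_cons.mp hpw).2

lemma binList_ne_nil {n : ℕ} (h : n ≠ 0) : binList n ≠ [] := by
  rw [binList_pos h]; simp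

lemma binList_head {n : ℕ} (h : n ≠ 0) : (binList n).head? = some (2 ^ Nat.log 2 n) := by
  rw [binList_pos h]; rfl
/-- The boolean predicate "q divides x". -/
def pdvd (q : ℕ) : ℕ → Bool := fun x => decide (q ∣ x)

lemma pdvd_eq_true {q x : ℕ} : pdvd q x = true ↔ q ∣ x := by simp [pdvd]

lemma pdvd_eq_false {q x : ℕ} : pdvd q x = false ↔ ¬ q ∣ x := by simp [pdvd]

lemma not_dvd_two_pow {q : ℕ} (hq : 1 < q) (hq2 : Nat.Coprime 2 q) (k : ℕ) :
    ¬ q ∣ 2 ^ k := fun h => absurd (((Nat.Coprime.pow_left k hq2).symm).eq_one_of_dvd h)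
  (by omega)

lemma takeWhile_append_eq {α : Type*} (p : α → Bool) (P S : List α)
    (hP : ∀ x ∈ P, p x = true) (hS : ∀ y ∈ S.head?, p y = false) :
    (P ++ S).takeWhile p = P ∧ (P ++ S).dropWhile p = S := by
  induction P with
  | nil =>
    simp only [List.nil_append]
    cases S with
    | nil => simp
    | cons a t =>
      have ha := hS a rfl
      constructor
      · rw [List.takeWhile_cons]; simp [ha]
      · rw [List.dropWhile_cons]; simp [ha]
  | cons a P ih =>
    have ha := hP a List.mem_cons_self
    have h2 := ih (fun x hx => hP x (List.mem_cons_of_mem _ hx))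
    constructor
    · rw [List.cons_append, List.takeWhile_cons]; simp [ha, h2.1]
    · rw [List.cons_append, List.dropWhile_cons]; simp [ha, h2.2]

lemma binList_head_not_dvd {q : ℕ} (hq : 1 < q) (hq2 : Nat.Coprime 2 q) (m : ℕ) :
    ∀ y ∈ (binList m).head?, pdvd q y = false := by
  intro y hy
  obtain ⟨k, rfl⟩ := binList_mem_pow (List.mem_of_mem_head? hy)
  exact pdvd_eq_false.mpr (not_dvd_two_pow hq hq2 k)

lemma power_of_not_dvd {q x a b : ℕ} (hx : x = 2 ^ a * q ^ b) (h : ¬ q ∣ x) :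
    ∃ k, x = 2 ^ k := by
  rcases Nat.eq_zero_or_pos b with rfl | hb
  · exact ⟨a, by simpa using hx⟩
  · exact absurd (hx ▸ Dvd.dvd.mul_left (dvd_pow_self q hb.ne') _) h

/-- Decomposition of a strictly chained partition into its `q`-divisible prefix and
its power-of-two suffix, which is the binary representation of its sum. -/
lemma omega_decomp {q : ℕ} (hq : 1 < q) (hq2 : Nat.Coprime 2 q) {N : ℕ} {l : List ℕ}
    (hl : IsSCPartition 2 q N l) :
    (∀ x ∈ l.takeWhile (pdvd q), q ∣ x) ∧
    (∀ x ∈ l.dropWhile (pdvd q), ¬ q ∣ x) ∧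
    l.dropWhile (pdvd q) = binList ((l.dropWhile (pdvd q)).sum) ∧
    (l.takeWhile (pdvd q)).sum + (l.dropWhile (pdvd q)).sum = N := by
  have hpw : l.Pairwise (fun x y => y ∣ x ∧ y < x) := List.isChain_iff_pairwise.mp hl.2.1
  have hPd : ∀ x ∈ l.takeWhile (pdvd q), q ∣ x := fun x hx =>
    pdvd_eq_true.mp (List.mem_takeWhile_imp hx)
  have hSpw : (l.dropWhile (pdvd q)).Pairwise (fun x y => y ∣ x ∧ y < x) :=
    hpw.sublist (List.dropWhile_sublist (pdvd q))
  have hSnd : ∀ x ∈ l.dropWhile (pdvd q), ¬ q ∣ x := by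
    cases hS : l.dropWhile (pdvd q) with
    | nil => simp
    | cons h t =>
      have h0 : 0 < (l.dropWhile (pdvd q)).length := by rw [hS]; simp
      have hh0 := List.dropWhile_get_zero_not (pdvd q) l h0
      have hget : (l.dropWhile (pdvd q)).get ⟨0, h0⟩ = h := by
        simp [List.get_mk_zero, hS]
      rw [hget] at hh0
      have hhd : ¬ q ∣ h := fun hd => hh0 (pdvd_eq_true.mpr hd)
      intro x hx
      rcases List.mem_cons.mp hx with rfl | hx
      · exact hhd
      · intro hd
        have hS' := hSpw
        rw [hS] at hS'
        exact hhd (hd.trans ((List.pairwise_cons.mp hS').1 x hx).1)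
  have hSpow : ∀ x ∈ l.dropWhile (pdvd q), ∃ k, x = 2 ^ k := by
    intro x hx
    obtain ⟨a, b, hab⟩ := hl.1 x ((List.dropWhile_sublist (pdvd q)).mem hx)
    exact power_of_not_dvd hab (hSnd x hx)
  refine ⟨hPd, hSnd, (binList_unique _ hSpow hSpw).symm, ?_⟩
  rw [← List.sum_append, List.takeWhile_append_dropWhile, hl.2.2]

/-- Gluing a `q`-divisible prefix and a binary list into a partition. -/
lemma mem_omega_append {q : ℕ} (hq : 1 < q) {P : List ℕ}
    (hP : ∀ x ∈ P, ∃ a b : ℕ, x = 2 ^ a * q ^ b)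
    (hPc : P.Chain' (fun x y => y ∣ x ∧ y < x)) {m : ℕ} (hm : m ≠ 0)
    (hlink : ∀ x ∈ P.getLast?, 2 ^ Nat.log 2 m ∣ x ∧ 2 ^ Nat.log 2 m < x) :
    IsSCPartition 2 q (P.sum + m) (P ++ binList m) := by
  refine ⟨?_, ?_, ?_⟩
  · intro x hx
    rcases List.mem_append.mp hx with hx | hx
    · exact hP x hx
    · obtain ⟨k, rfl⟩ := binList_mem_pow hx
      exact ⟨k, 0, by simp⟩
  · refine List.isChain_append.mpr ⟨hPc, (binList_pairwise m).isChain, ?_⟩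
    intro x hx y hy
    rw [binList_head hm] at hy
    rw [Option.mem_def, Option.some_inj] at hy
    exact hy ▸ hlink x hx
  · rw [List.sum_append, binList_sum]

lemma log_succ_le {s : ℕ} (hs : s ≠ 0) (hnp : ∀ t, s + 1 ≠ 2 ^ t) :
    Nat.log 2 (s + 1) ≤ Nat.log 2 s := by
  have h1 : s < 2 ^ (Nat.log 2 s + 1) := Nat.lt_pow_succ_log_self (by norm_num) s
  have h2 : s + 1 ≠ 2 ^ (Nat.log 2 s + 1) := hnp _
  have h3 : s + 1 < 2 ^ (Nat.log 2 s + 1) := by omega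
  have := (Nat.log_lt_iff_lt_pow (by norm_num) (by omega)).mpr h3
  omega

lemma omega_finite (q N : ℕ) : (Omega 2 q N).Finite := by
  apply Set.Finite.of_finite_image (f := List.toFinset)
  · apply Set.Finite.subset (Finset.finite_toSet ((Finset.range (N + 1)).powerset))
    rintro s ⟨l, hl, rfl⟩
    simp only [Finset.mem_coe, Finset.mem_powerset]
    intro x hx
    rw [List.mem_toFinset] at hx
    have : x ≤ l.sum := List.single_le_sum (fun _ _ => Nat.zero_le _) x hx
    rw [hl.2.2] at this
    exact Finset.mem_range.mpr (by omega)
  · intro l1 h1 l2 h2 he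
    have hp1 : l1.Pairwise (· > ·) :=
      (List.isChain_iff_pairwise.mp h1.2.1).imp (fun h => h.2)
    have hp2 : l2.Pairwise (· > ·) :=
      (List.isChain_iff_pairwise.mp h2.2.1).imp (fun h => h.2)
    have nd1 : l1.Nodup := hp1.imp (fun h => ne_of_gt h)
    have nd2 : l2.Nodup := hp2.imp (fun h => ne_of_gt h)
    haveI : IsAntisymm ℕ (· > ·) := ⟨fun a b h1 h2 => absurd h1 (lt_asymm h2)⟩
    exact List.Perm.eq_of_pairwise' hp1 hp2 (List.perm_of_nodup_nodup_toFinset_eq nd1 nd2 he)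

lemma map_mul_sum (q : ℕ) (l : List ℕ) : (l.map (· * q)).sum = l.sum * q := by
  induction l with
  | nil => simp
  | cons a t ih => simp [ih, add_mul]
theorem W_qU_p_eq_two (q : ℕ) (hq : 1 < q) (hq2 : Nat.Coprime 2 q)
    (U : ℕ) (hU : 1 ≤ U) :
    W 2 q (q * U) = W 2 q U + W 2 q (q * U - 1) := by
  have hqpos : 0 < q := by omega
  have hNq : q ∣ q * U := Dvd.intro U rfl
  have hN1 : q ≤ q * U := Nat.le_mul_of_pos_right q hU
  set N := q * U with hNdef
  set A : Set (List ℕ) := (fun l : List ℕ => l.map (· * q)) '' Omega 2 q U with hAdef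
  -- A is inside Omega N
  have hAmem : ∀ l ∈ Omega 2 q U, (l.map (· * q)) ∈ Omega 2 q N := by
    intro l hl
    refine ⟨?_, ?_, ?_⟩
    · intro x hx
      obtain ⟨y, hy, rfl⟩ := List.mem_map.mp hx
      obtain ⟨a, b, rfl⟩ := hl.1 y hy
      exact ⟨a, b + 1, by ring⟩
    · show List.IsChain _ _
      rw [List.isChain_map]
      exact hl.2.1.imp
        (fun a b h => ⟨mul_dvd_mul_right h.1 q, (Nat.mul_lt_mul_right hqpos).mpr h.2⟩)
    · rw [map_mul_sum, hl.2.2, mul_comm]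
  have hAsub : A ⊆ Omega 2 q N := by rintro _ ⟨l, hl, rfl⟩; exact hAmem l hl
  -- membership in A from q-divisibility of all parts
  have hAchar : ∀ l ∈ Omega 2 q N, (∀ x ∈ l, q ∣ x) → l ∈ A := by
    intro l hl hall
    have hback : (l.map (· / q)).map (· * q) = l := by
      rw [List.map_map]
      conv_rhs => rw [← List.map_id l]
      exact List.map_congr_left (fun x hx => Nat.div_mul_cancel (hall x hx))
    refine ⟨l.map (· / q), ⟨?_, ?_, ?_⟩, hback⟩
    · intro x hx
      obtain ⟨y, hy, rfl⟩ := List.mem_map.mp hx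
      obtain ⟨a, b, hab⟩ := hl.1 y hy
      rcases Nat.eq_zero_or_pos b with rfl | hb
      · exfalso
        refine not_dvd_two_pow hq hq2 a ?_
        have := hall y hy
        rw [hab] at this
        simpa using this
      · refine ⟨a, b - 1, ?_⟩
        subst hab
        have h2 : 2 ^ a * q ^ b = 2 ^ a * q ^ (b - 1) * q := by
          rw [mul_assoc, ← pow_succ, Nat.sub_add_cancel hb]
        rw [h2, Nat.mul_div_cancel _ hqpos]
    · show List.IsChain _ _
      rw [List.isChain_iff_pairwise, List.pairwise_map]
      refine (List.isChain_iff_pairwise.mp hl.2.1).imp_of_mem ?_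
      intro x y hx hy hxy
      constructor
      · obtain ⟨c, rfl⟩ := hxy.1
        obtain ⟨d, rfl⟩ := hall y hy
        rw [mul_assoc, Nat.mul_div_cancel_left _ hqpos, Nat.mul_div_cancel_left _ hqpos]
        exact Dvd.intro c rfl
      · exact Nat.div_lt_div_of_lt_of_dvd (hall x hx) hxy.2
    · have hs := congrArg List.sum hback
      rw [map_mul_sum, hl.2.2] at hs
      have : q * (l.map (· / q)).sum = q * U := by rw [mul_comm]; exact hs
      exact Nat.eq_of_mul_eq_mul_left hqpos this
  -- conversely, members of A have all parts divisible by q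
  have hAdvd : ∀ l ∈ A, ∀ x ∈ l, q ∣ x := by
    rintro _ ⟨m, _, rfl⟩ x hx
    obtain ⟨y, _, rfl⟩ := List.mem_map.mp hx
    exact dvd_mul_left q y
  -- suffix sums are nonzero on Omega N \ A
  have hspos : ∀ l ∈ Omega 2 q N, l ∉ A → (l.dropWhile (pdvd q)).sum ≠ 0 := by
    intro l hl hlA h0
    obtain ⟨hPd, _, hSbin, _⟩ := omega_decomp hq hq2 hl
    apply hlA
    apply hAchar l hl
    intro x hx
    rw [← List.takeWhile_append_dropWhile (p := pdvd q) (l := l)] at hx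
    rcases List.mem_append.mp hx with hx | hx
    · exact hPd x hx
    · rw [hSbin, h0, binList_zero] at hx
      simp at hx
  -- the suffix-shifting map
  set φ : List ℕ → List ℕ :=
    fun l => l.takeWhile (pdvd q) ++ binList ((l.dropWhile (pdvd q)).sum - 1) with hφdef
  have hbij : Set.BijOn φ (Omega 2 q N \ A) (Omega 2 q (N - 1)) := by
    refine ⟨?_, ?_, ?_⟩
    · -- MapsTo
      rintro l ⟨hl, hlA⟩
      obtain ⟨hPd, hSnd, hSbin, hsum⟩ := omega_decomp hq hq2 hl
      have hs0 : (l.dropWhile (pdvd q)).sum ≠ 0 := hspos l hl hlA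
      have hqs : q ∣ (l.dropWhile (pdvd q)).sum :=
        (Nat.dvd_add_right (List.dvd_sum hPd)).mp (hsum ▸ hNq)
      have hsq : q ≤ (l.dropWhile (pdvd q)).sum :=
        Nat.le_of_dvd (Nat.pos_of_ne_zero hs0) hqs
      have hlc := hl.2.1
      rw [← List.takeWhile_append_dropWhile (p := pdvd q) (l := l)] at hlc
      obtain ⟨hPc, -, hlk⟩ := List.isChain_append.mp hlc
      have hlink : ∀ x ∈ (l.takeWhile (pdvd q)).getLast?,
          2 ^ Nat.log 2 ((l.dropWhile (pdvd q)).sum - 1) ∣ x ∧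
          2 ^ Nat.log 2 ((l.dropWhile (pdvd q)).sum - 1) < x := by
        intro x hx
        have hhead : (l.dropWhile (pdvd q)).head?
            = some (2 ^ Nat.log 2 ((l.dropWhile (pdvd q)).sum)) := by
          conv_lhs => rw [hSbin]
          exact binList_head hs0
        have h1 := hlk x hx (2 ^ Nat.log 2 ((l.dropWhile (pdvd q)).sum))
          (by rw [Option.mem_def, hhead])
        have hmono : Nat.log 2 ((l.dropWhile (pdvd q)).sum - 1) ≤
            Nat.log 2 ((l.dropWhile (pdvd q)).sum) := Nat.log_mono_right (by omega)
        exact ⟨(pow_dvd_pow 2 hmono).trans h1.1,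
          lt_of_le_of_lt (Nat.pow_le_pow_right (by norm_num) hmono) h1.2⟩
      have hmm := mem_omega_append hq
        (fun x hx => hl.1 x ((List.takeWhile_sublist (pdvd q)).mem hx)) hPc
        (show (l.dropWhile (pdvd q)).sum - 1 ≠ 0 by omega) hlink
      rw [show (l.takeWhile (pdvd q)).sum + ((l.dropWhile (pdvd q)).sum - 1) = N - 1
        by omega] at hmm
      exact hmm
    · -- InjOn
      rintro l1 ⟨h1, h1A⟩ l2 ⟨h2, h2A⟩ he
      obtain ⟨hPd1, -, hSbin1, hsum1⟩ := omega_decomp hq hq2 h1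
      obtain ⟨hPd2, -, hSbin2, hsum2⟩ := omega_decomp hq hq2 h2
      have hs01 := hspos l1 h1 h1A
      have hs02 := hspos l2 h2 h2A
      have e1 := takeWhile_append_eq (pdvd q) (l1.takeWhile (pdvd q))
        (binList ((l1.dropWhile (pdvd q)).sum - 1))
        (fun x hx => pdvd_eq_true.mpr (hPd1 x hx)) (binList_head_not_dvd hq hq2 _)
      have e2 := takeWhile_append_eq (pdvd q) (l2.takeWhile (pdvd q))
        (binList ((l2.dropWhile (pdvd q)).sum - 1))
        (fun x hx => pdvd_eq_true.mpr (hPd2 x hx)) (binList_head_not_dvd hq hq2 _)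
      have hP12 : l1.takeWhile (pdvd q) = l2.takeWhile (pdvd q) := by
        rw [← e1.1, ← e2.1]
        exact congrArg _ he
      have hB12 : binList ((l1.dropWhile (pdvd q)).sum - 1)
          = binList ((l2.dropWhile (pdvd q)).sum - 1) := by
        rw [← e1.2, ← e2.2]
        exact congrArg _ he
      have hs12 : (l1.dropWhile (pdvd q)).sum = (l2.dropWhile (pdvd q)).sum := by
        have := congrArg List.sum hB12
        rw [binList_sum, binList_sum] at this
        omega
      calc l1 = l1.takeWhile (pdvd q) ++ l1.dropWhile (pdvd q) :=
            List.takeWhile_append_dropWhile.symm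
        _ = l2.takeWhile (pdvd q) ++ l2.dropWhile (pdvd q) := by
            rw [hP12, hSbin1, hSbin2, hs12]
        _ = l2 := List.takeWhile_append_dropWhile
    · -- SurjOn
      intro l' hl'
      obtain ⟨hPd, hSnd, hSbin, hsum⟩ := omega_decomp hq hq2 hl'
      have hs0 : (l'.dropWhile (pdvd q)).sum ≠ 0 := by
        intro h0
        rw [h0, add_zero] at hsum
        have hd1 : q ∣ N - 1 := hsum ▸ List.dvd_sum hPd
        have hd2 : q ∣ N - (N - 1) := Nat.dvd_sub hNq hd1
        rw [show N - (N - 1) = 1 by omega] at hd2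
        have := Nat.le_of_dvd one_pos hd2
        omega
      have hq1 : q ∣ (l'.dropWhile (pdvd q)).sum + 1 := by
        have hNs : (l'.takeWhile (pdvd q)).sum + ((l'.dropWhile (pdvd q)).sum + 1) = N := by
          omega
        exact (Nat.dvd_add_right (List.dvd_sum hPd)).mp (hNs ▸ hNq)
      have hnp : ∀ t, (l'.dropWhile (pdvd q)).sum + 1 ≠ 2 ^ t :=
        fun t ht => not_dvd_two_pow hq hq2 t (ht ▸ hq1)
      have hlog : Nat.log 2 ((l'.dropWhile (pdvd q)).sum + 1)
          ≤ Nat.log 2 ((l'.dropWhile (pdvd q)).sum) := log_succ_le hs0 hnp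
      have hlc := hl'.2.1
      rw [← List.takeWhile_append_dropWhile (p := pdvd q) (l := l')] at hlc
      obtain ⟨hPc, -, hlk⟩ := List.isChain_append.mp hlc
      have hlink : ∀ x ∈ (l'.takeWhile (pdvd q)).getLast?,
          2 ^ Nat.log 2 ((l'.dropWhile (pdvd q)).sum + 1) ∣ x ∧
          2 ^ Nat.log 2 ((l'.dropWhile (pdvd q)).sum + 1) < x := by
        intro x hx
        have hhead : (l'.dropWhile (pdvd q)).head?
            = some (2 ^ Nat.log 2 ((l'.dropWhile (pdvd q)).sum)) := by
          conv_lhs => rw [hSbin]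
          exact binList_head hs0
        have h1 := hlk x hx (2 ^ Nat.log 2 ((l'.dropWhile (pdvd q)).sum))
          (by rw [Option.mem_def, hhead])
        exact ⟨(pow_dvd_pow 2 hlog).trans h1.1,
          lt_of_le_of_lt (Nat.pow_le_pow_right (by norm_num) hlog) h1.2⟩
      have hmm := mem_omega_append hq
        (fun x hx => hl'.1 x ((List.takeWhile_sublist (pdvd q)).mem hx)) hPc
        (show (l'.dropWhile (pdvd q)).sum + 1 ≠ 0 by omega) hlink
      rw [show (l'.takeWhile (pdvd q)).sum + ((l'.dropWhile (pdvd q)).sum + 1) = N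
        by omega] at hmm
      refine ⟨l'.takeWhile (pdvd q) ++ binList ((l'.dropWhile (pdvd q)).sum + 1),
        ⟨hmm, ?_⟩, ?_⟩
      · -- not in A
        intro hA
        have hmem2 : 2 ^ Nat.log 2 ((l'.dropWhile (pdvd q)).sum + 1)
            ∈ binList ((l'.dropWhile (pdvd q)).sum + 1) := by
          rw [binList_pos (by omega)]
          exact List.mem_cons_self
        exact not_dvd_two_pow hq hq2 _
          (hAdvd _ hA _ (List.mem_append_right _ hmem2))
      · -- φ value is l'
        have e := takeWhile_append_eq (pdvd q) (l'.takeWhile (pdvd q))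
          (binList ((l'.dropWhile (pdvd q)).sum + 1))
          (fun x hx => pdvd_eq_true.mpr (hPd x hx)) (binList_head_not_dvd hq hq2 _)
        show (l'.takeWhile (pdvd q) ++ binList ((l'.dropWhile (pdvd q)).sum + 1)).takeWhile
              (pdvd q) ++
            binList ((((l'.takeWhile (pdvd q) ++ binList ((l'.dropWhile (pdvd q)).sum + 1)).dropWhile
              (pdvd q)).sum) - 1) = l'
        rw [e.1, e.2, binList_sum, Nat.add_sub_cancel, ← hSbin]
        exact List.takeWhile_append_dropWhile (p := pdvd q) (l := l')
  -- final counting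
  have hfinN := omega_finite q N
  have hinj : Set.InjOn (fun l : List ℕ => l.map (· * q)) (Omega 2 q U) :=
    (List.map_injective_iff.mpr (fun a b h => Nat.eq_of_mul_eq_mul_right hqpos h)).injOn
  have hAcard : A.ncard = W 2 q U := Set.ncard_image_of_injOn hinj
  have hdiff : (Omega 2 q N \ A).ncard = W 2 q (N - 1) := by
    calc (Omega 2 q N \ A).ncard = (φ '' (Omega 2 q N \ A)).ncard :=
          (Set.ncard_image_of_injOn hbij.injOn).symm
      _ = (Omega 2 q (N - 1)).ncard := by rw [hbij.image_eq]
  have hsplit := Set.ncard_diff_add_ncard_of_subset hAsub hfinN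
  show (Omega 2 q N).ncard = W 2 q U + W 2 q (N - 1)
  omega
end
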